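/- Let ≿ be a complete transitive relation on a compact convex subset X of a Hausdorff topological vector space, with closed contour sets, satisfying betweenness, and with maximal element x* and minimal element x_* satisfying x* ≻ x_*. For t ∈ [0,1], set m_t = t x* + (1−t) x_*. Then for every x ∈ X there exists a unique t ∈ [0,1] such that x ∼ m_t. -/

import Mathlib

open Set

theorem calibration_exists_unique
    {E : Type*} [AddCommGroup E] [Module ℝ E] [TopologicalSpace E]
    [IsTopologicalAddGroup E] [ContinuousSMul ℝ E] [T2Space E]
    (X : Set E) (hXconv : Convex ℝ X) (hXcomp : IsCompact X)
    (r : E → E → Prop)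
    (hcomp : ∀ x ∈ X, ∀ y ∈ X, r x y ∨ r y x)
    (htrans : ∀ x ∈ X, ∀ y ∈ X, ∀ z ∈ X, r x y → r y z → r x z)
    (hclosed : ∀ y ∈ X, IsClosed {x ∈ X | r x y} ∧ IsClosed {x ∈ X | r y x})
    (hbet : ∀ x ∈ X, ∀ y ∈ X, ∀ l ∈ Ioo (0:ℝ) 1,
      (r x y ∧ ¬ r y x) →
        ((r x (l • x + (1 - l) • y) ∧ ¬ r (l • x + (1 - l) • y) x) ∧
         (r (l • x + (1 - l) • y) y ∧ ¬ r y (l • x + (1 - l) • y))))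
    (xstar xlow : E) (hxstar : xstar ∈ X) (hxlow : xlow ∈ X)
    (hbest : ∀ x ∈ X, r xstar x) (hworst : ∀ x ∈ X, r x xlow)
    (hstrict : r xstar xlow ∧ ¬ r xlow xstar) :
    ∀ x ∈ X, ∃! t : ℝ, t ∈ Icc (0:ℝ) 1 ∧
      (r x (t • xstar + (1 - t) • xlow) ∧ r (t • xstar + (1 - t) • xlow) x) := by
  intro x hx
  set m : ℝ → E := fun t => t • xstar + (1 - t) • xlow with hm
  have hmX : ∀ t ∈ Icc (0:ℝ) 1, m t ∈ X := fun t ht =>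
    hXconv hxstar hxlow ht.1 (by linarith [ht.2]) (by ring)
  have hm1 : m 1 = xstar := by simp [hm]
  have hm0 : m 0 = xlow := by simp [hm]
  have hmcont : Continuous m := by
    apply Continuous.add
    · exact (continuous_id.smul continuous_const)
    · exact ((continuous_const.sub continuous_id).smul continuous_const)
  -- strict monotonicity: for 0 ≤ s < t ≤ 1, m t ≻ m s
  have hmono : ∀ s t : ℝ, 0 ≤ s → s < t → t ≤ 1 →
      r (m t) (m s) ∧ ¬ r (m s) (m t) := by
    intro s t hs hst ht1
    have ht0 : (0:ℝ) < t := lt_of_le_of_lt hs hst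
    have hmtX : m t ∈ X := hmX t ⟨le_of_lt ht0, ht1⟩
    have hPt : r (m t) xlow ∧ ¬ r xlow (m t) := by
      rcases eq_or_lt_of_le ht1 with h1 | h1
      · rw [h1, hm1]; exact hstrict
      · exact (hbet xstar hxstar xlow hxlow t ⟨ht0, h1⟩ hstrict).2
    rcases eq_or_lt_of_le hs with h0 | h0
    · rw [← h0, hm0]; exact hPt
    · -- s ∈ (0, t); m s = (s/t) • m t + (1 - s/t) • xlow
      have hl : s / t ∈ Ioo (0:ℝ) 1 := ⟨div_pos h0 ht0, (div_lt_one ht0).2 hst⟩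
      have key := (hbet (m t) hmtX xlow hxlow (s / t) hl hPt).1
      have heq : (s / t) • m t + (1 - s / t) • xlow = m s := by
        have hat : s / t * t = s := div_mul_cancel₀ s ht0.ne'
        have htne : t ≠ 0 := ht0.ne'
        have hc : s / t * (1 - t) + (1 - s / t) = 1 - s := by
          field_simp
          ring
        simp only [hm, smul_add, smul_smul]
        rw [hat, add_assoc, ← add_smul, hc]
      rw [heq] at key
      exact key
  -- existence
  have hex : ∃ t : ℝ, t ∈ Icc (0:ℝ) 1 ∧ (r x (m t) ∧ r (m t) x) := by
    have hS1 : IsClosed {z ∈ X | r z x} := (hclosed x hx).1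
    have hS2 : IsClosed {z ∈ X | r x z} := (hclosed x hx).2
    have hA : IsClosed (m ⁻¹' {z ∈ X | r z x}) := hS1.preimage hmcont
    have hB : IsClosed (m ⁻¹' {z ∈ X | r x z}) := hS2.preimage hmcont
    have hpc : IsPreconnected (Icc (0:ℝ) 1) := isPreconnected_Icc
    have hsub : Icc (0:ℝ) 1 ⊆ m ⁻¹' {z ∈ X | r z x} ∪ m ⁻¹' {z ∈ X | r x z} := by
      intro t ht
      have hmt := hmX t ht
      rcases hcomp (m t) hmt x hx with h | h
      · exact Or.inl ⟨hmt, h⟩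
      · exact Or.inr ⟨hmt, h⟩
    have hne1 : (Icc (0:ℝ) 1 ∩ m ⁻¹' {z ∈ X | r z x}).Nonempty := by
      refine ⟨1, ⟨le_of_lt one_pos, le_refl 1⟩, ?_⟩
      simp only [mem_preimage, hm1, mem_setOf_eq]
      exact ⟨hxstar, hbest x hx⟩
    have hne2 : (Icc (0:ℝ) 1 ∩ m ⁻¹' {z ∈ X | r x z}).Nonempty := by
      refine ⟨0, ⟨le_refl 0, le_of_lt one_pos⟩, ?_⟩
      simp only [mem_preimage, hm0, mem_setOf_eq]
      exact ⟨hxlow, hworst x hx⟩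
    obtain ⟨t, ht, h1, h2⟩ :=
      (isPreconnected_closed_iff.mp hpc) _ _ hA hB hsub hne1 hne2
    exact ⟨t, ht, h2.2, h1.2⟩
  obtain ⟨t, ht, htr⟩ := hex
  refine ⟨t, ⟨ht, htr⟩, ?_⟩
  -- uniqueness
  intro s ⟨hs, hsr⟩
  by_contra hne
  have hmsX : m s ∈ X := hmX s hs
  have hmtX : m t ∈ X := hmX t ht
  rcases lt_or_gt_of_ne hne with h | h
  · have := hmono s t hs.1 h ht.2
    exact this.2 (htrans (m s) hmsX x hx (m t) hmtX hsr.2 htr.1)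
  · have := hmono t s ht.1 h hs.2
    exact this.2 (htrans (m t) hmtX x hx (m s) hmsX htr.2 hsr.1)
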